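/- Let f : ℝ → ℝ ∪ {−∞} be dominated by an affine function and let g : ℝ → ℝ be concave and continuous. Then for all h ∈ ℝ, (f + g)⋆⋆(h) ≤ f⋆⋆(h) + g(h); equivalently, the generalized Legendre spectrum L_g = (f+g)⋆⋆ − g never exceeds the classical Legendre spectrum f⋆⋆. -/

import Mathlib

open Filter Set

/-- Multifractal-style Legendre transform (concave convention):
`legStar d f q = ⨅ h, (d + q·h) − f h`. -/
noncomputable def legStar (d : ℝ) (f : ℝ → EReal) (q : ℝ) : EReal :=
  ⨅ h : ℝ, ((d + q * h : ℝ) : EReal) - f h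

/-- Double Legendre transform. -/
noncomputable def legStar2 (d : ℝ) (f : ℝ → EReal) (x : ℝ) : EReal :=
  ⨅ q : ℝ, ((d + q * x : ℝ) : EReal) - legStar d f q

/-- Concave envelope: pointwise infimum of all affine majorants. -/
noncomputable def concEnv (f : ℝ → EReal) (x : ℝ) : EReal :=
  ⨅ p : {p : ℝ × ℝ // ∀ t, f t ≤ ((p.1 * t + p.2 : ℝ) : EReal)},
    ((p.1.1 * x + p.1.2 : ℝ) : EReal)

/-- A concave function on `ℝ` has a supporting line at every point. -/
lemma concave_support_line {φ : ℝ → ℝ} (hφ : ConcaveOn ℝ Set.univ φ) (h : ℝ) :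
    ∃ c : ℝ, ∀ t, φ t ≤ φ h + c * (t - h) := by
  set S : Set ℝ := {s | ∃ t, h < t ∧ s = (φ t - φ h) / (t - h)} with hS
  have hne : S.Nonempty := ⟨(φ (h + 1) - φ h) / (h + 1 - h), h + 1, by linarith, rfl⟩
  have hub : ∀ t₀ < h, ∀ s ∈ S, s ≤ (φ h - φ t₀) / (h - t₀) := by
    rintro t₀ ht₀ s ⟨t, ht, rfl⟩
    exact hφ.slope_anti_adjacent (mem_univ t₀) (mem_univ t) ht₀ ht
  have hbdd : BddAbove S := ⟨(φ h - φ (h - 1)) / (h - (h - 1)), fun s hs =>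
    hub (h - 1) (by linarith) s hs⟩
  refine ⟨sSup S, fun t => ?_⟩
  rcases lt_trichotomy t h with hlt | rfl | hgt
  · have hc : sSup S ≤ (φ h - φ t) / (h - t) := csSup_le hne (hub t hlt)
    have hpos : 0 < h - t := by linarith
    have hc' : sSup S * (h - t) ≤ φ h - φ t := (le_div_iff₀ hpos).mp hc
    have : sSup S * (t - h) = -(sSup S * (h - t)) := by ring
    linarith
  · simp
  · have hmem : (φ t - φ h) / (t - h) ∈ S := ⟨t, hgt, rfl⟩
    have hc := le_csSup hbdd hmem
    have hpos : 0 < t - h := by linarith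
    rw [div_le_iff₀ hpos] at hc
    linarith

/-- (f + g)⋆⋆ ≤ f⋆⋆ + g for concave continuous real g. -/
theorem generalized_spectrum_le_legendre (f : ℝ → EReal)
    (hdom : ∃ α β : ℝ, ∀ h, f h ≤ ((α * h + β : ℝ) : EReal))
    (g : ℝ → ℝ) (hgconc : ConcaveOn ℝ Set.univ g) (hgcont : Continuous g) :
    ∀ h : ℝ,
      concEnv (fun t => f t + (g t : EReal)) h ≤ concEnv f h + (g h : EReal) := by
  intro h
  rw [← EReal.sub_le_iff_le_add (.inl (EReal.coe_ne_bot _)) (.inl (EReal.coe_ne_top _))]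
  refine le_iInf fun p => ?_
  rw [EReal.sub_le_iff_le_add (.inl (EReal.coe_ne_bot _)) (.inl (EReal.coe_ne_top _))]
  obtain ⟨⟨a, b⟩, hp⟩ := p
  -- the concave function t ↦ a*t + b + g t has a supporting line at h
  have hconc : ConcaveOn ℝ Set.univ (fun t => a * t + b + g t) := by
    have haff : ConcaveOn ℝ Set.univ (fun t : ℝ => a * t + b) :=
      ((LinearMap.mul ℝ ℝ a).concaveOn convex_univ).add (concaveOn_const b convex_univ)
    exact haff.add hgconc
  obtain ⟨c, hc⟩ := concave_support_line hconc h
  have hmaj : ∀ t, (fun t => f t + (g t : EReal)) t ≤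
      ((c * t + (a * h + b + g h - c * h) : ℝ) : EReal) := by
    intro t
    have h1 : f t + (g t : EReal) ≤ ((a * t + b + g t : ℝ) : EReal) := by
      have := hp t
      calc f t + (g t : EReal) ≤ ((a * t + b : ℝ) : EReal) + (g t : EReal) :=
            add_le_add_left this _
        _ = ((a * t + b + g t : ℝ) : EReal) := by rw [← EReal.coe_add]
    refine h1.trans ?_
    rw [EReal.coe_le_coe_iff]
    have := hc t
    linarith
  calc concEnv (fun t => f t + (g t : EReal)) h
      ≤ ((c * h + (a * h + b + g h - c * h) : ℝ) : EReal) :=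
        iInf_le _ (⟨(c, a * h + b + g h - c * h), hmaj⟩ :
          {p : ℝ × ℝ // ∀ t, (fun t => f t + (g t : EReal)) t ≤ ((p.1 * t + p.2 : ℝ) : EReal)})
    _ = ((a * h + b : ℝ) : EReal) + (g h : EReal) := by
        rw [← EReal.coe_add]; norm_num
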